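/- arXiv:2101.08746 — 6 statements merged into one kernel-verified Lean document; each statement's English description precedes it below -/
import Mathlib

section
/- Validity of the basic (binary) mixing/star inequality: Let r_1,…,r_N ≥ 0 and consider the mixing set M = {(t,z) ∈ ℝ_+ × {0,1}^N : t + r_i z_i ≥ r_i for all i ∈ [N]}. For any subset S = {s_1,…,s_ℓ} ⊆ [N] with r_{s_1} ≥ r_{s_2} ≥ ⋯ ≥ r_{s_ℓ}, and with the convention r_{s_{ℓ+1}} := 0, every (t,z) ∈ M satisfies t + Σ_{i=1}^{ℓ} (r_{s_i} − r_{s_{i+1}}) z_{s_i} ≥ r_{s_1}. -/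
private lemma mixing_star_aux : ∀ (ℓ : ℕ) (hℓ : 0 < ℓ) {N : ℕ} (r : Fin N → ℝ),
    (∀ i, 0 ≤ r i) → ∀ (s : Fin ℓ → Fin N),
    (∀ i j : Fin ℓ, i ≤ j → r (s j) ≤ r (s i)) →
    ∀ (t : ℝ), 0 ≤ t → ∀ (z : Fin N → ℝ), (∀ i, z i = 0 ∨ z i = 1) →
    (∀ i, r i ≤ t + r i * z i) →
    r (s ⟨0, hℓ⟩) ≤ t + ∑ i : Fin ℓ,
      (r (s i) - (if h : (i : ℕ) + 1 < ℓ then r (s ⟨(i : ℕ) + 1, h⟩) else 0)) * z (s i) := by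
  intro ℓ
  induction ℓ with
  | zero => intro h; omega
  | succ m ih =>
    intro hℓ N r hr s hsorted t ht z hz hmix
    rw [Fin.sum_univ_succ]
    rcases Nat.eq_zero_or_pos m with hm | hm
    · subst hm
      simp only [Finset.univ_eq_empty, Finset.sum_empty, add_zero, Fin.val_zero]
      have h0 : (⟨0, hℓ⟩ : Fin 1) = 0 := rfl
      rw [h0]
      split_ifs with h
      · omega
      · rw [sub_zero]; linarith [hmix (s 0)]
    · -- m > 0
      have h1 : (0 : ℕ) + 1 < m + 1 := by omega
      have tail_eq : ∀ i : Fin m,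
          (r (s i.succ) - (if h : (i.succ : ℕ) + 1 < m + 1 then r (s ⟨(i.succ : ℕ) + 1, h⟩) else 0)) * z (s i.succ)
          = (r ((s ∘ Fin.succ) i) - (if h : (i : ℕ) + 1 < m then r ((s ∘ Fin.succ) ⟨(i : ℕ) + 1, h⟩) else 0)) * z ((s ∘ Fin.succ) i) := by
        intro i
        simp only [Function.comp_apply, Fin.val_succ]
        congr 2
        split_ifs with h h' h'
        · congr 1
        · omega
        · omega
        · rfl
      rcases hz (s 0) with hz0 | hz0
      · -- z (s 0) = 0 : t ≥ r (s 0), rest of sum is nonnegative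
        have ht0 : r (s 0) ≤ t := by
          have := hmix (s 0); rw [hz0] at this; linarith
        have hnn : ∀ i : Fin m, 0 ≤
            (r (s i.succ) - (if h : (i.succ : ℕ) + 1 < m + 1 then r (s ⟨(i.succ : ℕ) + 1, h⟩) else 0)) * z (s i.succ) := by
          intro i
          apply mul_nonneg
          · split_ifs with h
            · have : i.succ ≤ (⟨(i.succ : ℕ) + 1, h⟩ : Fin (m+1)) := by
                simp [Fin.le_def]
              linarith [hsorted i.succ ⟨(i.succ : ℕ) + 1, h⟩ this]
            · linarith [hr (s i.succ)]
          · rcases hz (s i.succ) with h | h <;> rw [h] <;> norm_num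
        have hsum : 0 ≤ ∑ i : Fin m,
            (r (s i.succ) - (if h : (i.succ : ℕ) + 1 < m + 1 then r (s ⟨(i.succ : ℕ) + 1, h⟩) else 0)) * z (s i.succ) :=
          Finset.sum_nonneg fun i _ => hnn i
        have h0 : (⟨0, hℓ⟩ : Fin (m+1)) = 0 := rfl
        rw [h0, hz0]
        have hfirst : (r (s 0) - (if h : (0:ℕ) + 1 < m + 1 then r (s ⟨(0:ℕ)+1, h⟩) else 0)) * (0:ℝ) = 0 := by ring
        simp only [Fin.val_zero]
        simp only [mul_zero, zero_add]
        linarith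
      · -- z (s 0) = 1
        have htail := ih hm r hr (s ∘ Fin.succ)
          (fun i j hij => hsorted i.succ j.succ (Fin.succ_le_succ_iff.mpr hij))
          t ht z hz hmix
        have hs1 : (s ∘ Fin.succ) ⟨0, hm⟩ = s ⟨1, h1⟩ := by
          rfl
        rw [hs1] at htail
        rw [Finset.sum_congr rfl (fun i _ => tail_eq i)] at *
        have h0 : (⟨0, hℓ⟩ : Fin (m+1)) = 0 := rfl
        rw [h0, hz0]
        rw [dif_pos (show ((0 : Fin (m+1)) : ℕ) + 1 < m + 1 from h1)]
        simp only [Fin.val_zero]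
        have hmono : r (s ⟨1, h1⟩) ≤ r (s 0) := hsorted 0 ⟨1, h1⟩ (by simp [Fin.le_def])
        have : (0:ℕ) + 1 = 1 := rfl
        have hcast : (⟨(0:ℕ)+1, h1⟩ : Fin (m+1)) = ⟨1, h1⟩ := rfl
        rw [hcast]
        linarith

/-- Validity of the basic (binary) mixing/star inequality. -/
theorem mixing_star_valid (N ℓ : ℕ) (hℓ : 0 < ℓ) (r : Fin N → ℝ) (hr : ∀ i, 0 ≤ r i)
    (s : Fin ℓ → Fin N) (hsinj : Function.Injective s)
    (hsorted : ∀ i j : Fin ℓ, i ≤ j → r (s j) ≤ r (s i))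
    (t : ℝ) (ht : 0 ≤ t) (z : Fin N → ℝ) (hz : ∀ i, z i = 0 ∨ z i = 1)
    (hmix : ∀ i, r i ≤ t + r i * z i) :
    r (s ⟨0, hℓ⟩) ≤ t + ∑ i : Fin ℓ,
      (r (s i) - (if h : (i : ℕ) + 1 < ℓ then r (s ⟨(i : ℕ) + 1, h⟩) else 0)) * z (s i) := by
  exact mixing_star_aux ℓ hℓ r hr s hsorted t ht z hz hmix
end

section
/- Quantile strengthening of big-M: Let r_1,…,r_N ≥ 0, let k be a nonnegative integer with k < N, and let σ be a permutation of [N] with r_{σ_1} ≥ r_{σ_2} ≥ ⋯ ≥ r_{σ_N}. Then for any (t,z) ∈ ℝ_+ × {0,1}^N satisfying t + r_i z_i ≥ r_i for all i ∈ [N] and Σ_{i∈[N]} z_i ≤ k, it holds that t ≥ r_{σ_{k+1}}; consequently (t,z) also satisfies the strengthened constraints t + (r_i − r_{σ_{k+1}}) z_i ≥ r_i for all i ∈ [N]. -/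
/-- Quantile strengthening of big-M: under the cardinality constraint,
t ≥ r_{σ_{k+1}} and the strengthened mixing constraints hold. -/
theorem quantile_strengthening (N k : ℕ) (hk : k < N) (r : Fin N → ℝ) (hr : ∀ i, 0 ≤ r i)
    (σ : Equiv.Perm (Fin N))
    (hsorted : ∀ i j : Fin N, i ≤ j → r (σ j) ≤ r (σ i))
    (t : ℝ) (ht : 0 ≤ t) (z : Fin N → ℝ) (hz : ∀ i, z i = 0 ∨ z i = 1)
    (hmix : ∀ i, r i ≤ t + r i * z i)
    (hcard : ∑ i, z i ≤ (k : ℝ)) :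
    r (σ ⟨k, hk⟩) ≤ t ∧ ∀ i, r i ≤ t + (r i - r (σ ⟨k, hk⟩)) * z i := by
  have hzn : ∀ i, 0 ≤ z i := fun i => by rcases hz i with h | h <;> simp [h]
  -- find j ≤ k with z (σ j) = 0
  have hmain : r (σ ⟨k, hk⟩) ≤ t := by
    by_contra hc
    push_neg at hc
    have hall : ∀ j : Fin N, j ≤ ⟨k, hk⟩ → z (σ j) = 1 := by
      intro j hj
      rcases hz (σ j) with h0 | h1
      · exfalso
        have h2 := hmix (σ j)
        rw [h0, mul_zero, add_zero] at h2
        have h3 := hsorted j ⟨k, hk⟩ hj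
        linarith
      · exact h1
    have hsum : (k : ℝ) + 1 ≤ ∑ i, z i := by
      have := Equiv.sum_comp σ z
      rw [← this]
      calc (k : ℝ) + 1 = ∑ j ∈ Finset.Iic (⟨k, hk⟩ : Fin N), z (σ j) := by
            rw [Finset.sum_congr rfl (fun j hj => hall j (Finset.mem_Iic.mp hj))]
            simp [Fin.card_Iic]
        _ ≤ ∑ j, z (σ j) := Finset.sum_le_sum_of_subset_of_nonneg
            (Finset.subset_univ _) (fun i _ _ => hzn (σ i))
    linarith
  refine ⟨hmain, fun i => ?_⟩
  rcases hz i with h0 | h1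
  · have := hmix i; rw [h0, mul_zero, add_zero] at this; simpa [h0] using this
  · rw [h1, mul_one]; linarith [hmain]
end

section
/- Validity of the strengthened mixing inequality with cardinality: Let r ∈ ℝ_+^N, k < N an integer, σ a permutation of [N] with r_{σ_1} ≥ ⋯ ≥ r_{σ_N}. Let S = {s_1,…,s_ℓ} ⊆ {σ_1,…,σ_k} satisfy r_{s_1} ≥ ⋯ ≥ r_{s_ℓ}, with s_1 = σ_1 and the convention r_{s_{ℓ+1}} := r_{σ_{k+1}}. Then every (t,z) ∈ ℝ_+ × {0,1}^N with t + r_i z_i ≥ r_i for all i and Σ_i z_i ≤ k satisfies t + Σ_{i=1}^{ℓ} (r_{s_i} − r_{s_{i+1}}) z_{s_i} ≥ r_{s_1}. -/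
/-- Validity of the strengthened mixing inequality with a cardinality constraint. -/
theorem strengthened_mixing_valid (N k ℓ : ℕ) (hk : k < N) (hℓ : 0 < ℓ)
    (r : Fin N → ℝ) (hr : ∀ i, 0 ≤ r i)
    (σ : Equiv.Perm (Fin N))
    (hsorted : ∀ i j : Fin N, i ≤ j → r (σ j) ≤ r (σ i))
    (s : Fin ℓ → Fin N) (hsinj : Function.Injective s)
    (hsub : ∀ i : Fin ℓ, ∃ j : Fin N, (j : ℕ) < k ∧ s i = σ j)
    (hs1 : s ⟨0, hℓ⟩ = σ ⟨0, Nat.lt_of_le_of_lt (Nat.zero_le k) hk⟩)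
    (hssorted : ∀ i j : Fin ℓ, i ≤ j → r (s j) ≤ r (s i))
    (t : ℝ) (ht : 0 ≤ t) (z : Fin N → ℝ) (hz : ∀ i, z i = 0 ∨ z i = 1)
    (hmix : ∀ i, r i ≤ t + r i * z i)
    (hcard : ∑ i, z i ≤ (k : ℝ)) :
    r (s ⟨0, hℓ⟩) ≤ t + ∑ i : Fin ℓ,
      (r (s i) - (if h : (i : ℕ) + 1 < ℓ then r (s ⟨(i : ℕ) + 1, h⟩)
        else r (σ ⟨k, hk⟩))) * z (s i) := by
  classical
  set g : ℕ → ℝ := fun j => if h : j < ℓ then r (s ⟨j, h⟩) else r (σ ⟨k, hk⟩) with hgdef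
  set w : ℕ → ℝ := fun j => if h : j < ℓ then z (s ⟨j, h⟩) else 1 with hwdef
  have hgstep : ∀ j, g (j + 1) ≤ g j := by
    intro j
    by_cases h1 : j + 1 < ℓ
    · have hj : j < ℓ := Nat.lt_of_succ_lt h1
      simp only [hgdef, dif_pos h1, dif_pos hj]
      exact hssorted ⟨j, hj⟩ ⟨j + 1, h1⟩ (by simp [Fin.le_def])
    · by_cases hj : j < ℓ
      · simp only [hgdef, dif_neg h1, dif_pos hj]
        obtain ⟨j', hj', hsj⟩ := hsub ⟨j, hj⟩
        rw [hsj]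
        exact hsorted j' ⟨k, hk⟩ (by simp [Fin.le_def]; omega)
      · simp only [hgdef, dif_neg h1, dif_neg hj, le_refl]
  have hw01 : ∀ j, w j = 0 ∨ w j = 1 := by
    intro j
    by_cases hj : j < ℓ
    · simp only [hwdef, dif_pos hj]; exact hz _
    · right; simp [hwdef, dif_neg hj]
  have hwnn : ∀ j, 0 ≤ w j := by
    intro j; rcases hw01 j with h | h <;> rw [h] <;> norm_num
  have hw0t : ∀ j, j < ℓ → w j = 0 → g j ≤ t := by
    intro j hj h0
    have := hmix (s ⟨j, hj⟩)
    simp only [hwdef, dif_pos hj] at h0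
    rw [h0, mul_zero, add_zero] at this
    simpa only [hgdef, dif_pos hj] using this
  have hterm_nn : ∀ j, 0 ≤ (g j - g (j + 1)) * w j := fun j =>
    mul_nonneg (by linarith [hgstep j]) (hwnn j)
  have hsum : (∑ i : Fin ℓ,
      (r (s i) - (if h : (i : ℕ) + 1 < ℓ then r (s ⟨(i : ℕ) + 1, h⟩)
        else r (σ ⟨k, hk⟩))) * z (s i)) = ∑ j ∈ Finset.range ℓ, (g j - g (j + 1)) * w j := by
    rw [← Fin.sum_univ_eq_sum_range (fun j => (g j - g (j + 1)) * w j) ℓ]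
    refine Finset.sum_congr rfl fun i _ => ?_
    have hi : (i : ℕ) < ℓ := i.isLt
    simp only [hgdef, hwdef, dif_pos hi, Fin.eta]
  rw [hsum]
  have hg0 : g 0 = r (s ⟨0, hℓ⟩) := by simp only [hgdef, dif_pos hℓ]
  by_cases hex : ∃ j, j < ℓ ∧ w j = 0
  · set m := Nat.find hex with hmdef
    obtain ⟨hmℓ, hwm⟩ := Nat.find_spec hex
    have hmin : ∀ j, j < m → ¬(j < ℓ ∧ w j = 0) := fun j hj => Nat.find_min hex hj
    have hone : ∀ j < m, w j = 1 := by
      intro j hj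
      rcases hw01 j with h0 | h1
      · exact absurd ⟨Nat.lt_trans hj hmℓ, h0⟩ (hmin j hj)
      · exact h1
    have htel : ∑ j ∈ Finset.range m, (g j - g (j + 1)) * w j = g 0 - g m := by
      rw [← Finset.sum_range_sub' g m]
      exact Finset.sum_congr rfl fun j hj => by
        rw [hone j (Finset.mem_range.mp hj), mul_one]
    have hsub' : Finset.range m ⊆ Finset.range ℓ :=
      Finset.range_subset_range.mpr (le_of_lt hmℓ)
    have hle : g 0 - g m ≤ ∑ j ∈ Finset.range ℓ, (g j - g (j + 1)) * w j := by
      rw [← htel]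
      exact Finset.sum_le_sum_of_subset_of_nonneg hsub' fun j _ _ => hterm_nn j
    have hgt : g m ≤ t := hw0t m hmℓ hwm
    linarith [hle, hgt, hg0.symm ▸ (le_refl (g 0))]
  · push_neg at hex
    have hall : ∀ j, j < ℓ → w j = 1 := fun j hj =>
      (hw01 j).resolve_left (hex j hj)
    have hsum2 : ∑ j ∈ Finset.range ℓ, (g j - g (j + 1)) * w j = g 0 - g ℓ := by
      rw [← Finset.sum_range_sub' g ℓ]
      exact Finset.sum_congr rfl fun j hj => by
        rw [hall j (Finset.mem_range.mp hj), mul_one]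
    have hgℓ : g ℓ = r (σ ⟨k, hk⟩) := by simp only [hgdef, dif_neg (lt_irrefl ℓ)]
    have htk : r (σ ⟨k, hk⟩) ≤ t := by
      by_contra hlt
      push_neg at hlt
      have hone : ∀ j : Fin N, (j : ℕ) ≤ k → z (σ j) = 1 := by
        intro j hj
        rcases hz (σ j) with h0 | h1
        · exfalso
          have hm := hmix (σ j)
          rw [h0, mul_zero, add_zero] at hm
          have hrk : r (σ ⟨k, hk⟩) ≤ r (σ j) := hsorted j ⟨k, hk⟩ hj
          linarith
        · exact h1
      set e : Fin (k + 1) → Fin N := fun j => σ (Fin.castLE hk j) with hedef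
      have hinj : Function.Injective e :=
        σ.injective.comp (Fin.castLE_injective hk)
      have hval : (∑ j : Fin (k + 1), z (e j)) = (k : ℝ) + 1 := by
        have : ∀ j : Fin (k + 1), z (e j) = 1 := by
          intro j
          exact hone (Fin.castLE hk j) (by
            have := j.isLt; simp [Fin.castLE]; omega)
        rw [Finset.sum_congr rfl fun j _ => this j]
        simp
      have him : (∑ j : Fin (k + 1), z (e j)) = ∑ i ∈ Finset.univ.image e, z i :=
        (Finset.sum_image (fun a _ b _ h => hinj h)).symm
      have hle2 : (∑ i ∈ Finset.univ.image e, z i) ≤ ∑ i, z i :=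
        Finset.sum_le_sum_of_subset_of_nonneg (Finset.subset_univ _)
          (fun i _ _ => by rcases hz i with h | h <;> rw [h] <;> norm_num)
      linarith [him, hval, hle2, hcard]
    rw [hsum2, hgℓ, hg0]
    linarith
end

section
/- Validity of the quantile cut: Fix φ ∈ ℝ^n, finitely many scenarios ω_1,…,ω_N each with probability 1/N, sets P(ω_i) ⊆ ℝ^n and X ⊆ ℝ^n, and let q_i := inf{ φᵀx : x ∈ P(ω_i) ∩ X } for each i. Sort so that q_{σ_1} ≥ q_{σ_2} ≥ ⋯ ≥ q_{σ_N}, and let k := ⌊εN⌋ with ε ∈ (0,1). Then every x ∈ X satisfying the sample chance constraint (1/N)·#{ i : x ∉ P(ω_i) } ≤ ε satisfies φᵀx ≥ q_{σ_{k+1}}. -/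
open scoped Classical

/-- Validity of the quantile cut for sample chance constraints. -/
theorem quantile_cut_valid (N n : ℕ) (hN : 0 < N) (ε : ℝ) (hε : ε ∈ Set.Ioo (0:ℝ) 1)
    (P : Fin N → Set (Fin n → ℝ)) (X : Set (Fin n → ℝ)) (φ : Fin n → ℝ)
    (q : Fin N → ℝ)
    (hq : ∀ i, IsGLB {c : ℝ | ∃ y, y ∈ P i ∧ y ∈ X ∧ c = ∑ j, φ j * y j} (q i))
    (σ : Equiv.Perm (Fin N))
    (hsorted : ∀ i j : Fin N, i ≤ j → q (σ j) ≤ q (σ i))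
    (hk : Nat.floor (ε * N) < N)
    (x : Fin n → ℝ) (hxX : x ∈ X)
    (hcc : (1 / (N : ℝ)) *
      ((Finset.univ.filter (fun i : Fin N => x ∉ P i)).card : ℝ) ≤ ε) :
    q (σ ⟨Nat.floor (ε * N), hk⟩) ≤ ∑ j, φ j * x j := by
  set k := Nat.floor (ε * N) with hkdef
  set B := Finset.univ.filter (fun i : Fin N => x ∉ P i) with hB
  -- card B ≤ k
  have hNpos : (0:ℝ) < N := by exact_mod_cast hN
  have hBk : B.card ≤ k := by
    have h1 : (B.card : ℝ) ≤ ε * N := by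
      rw [div_mul_eq_mul_div, one_mul, div_le_iff₀ hNpos] at hcc
      linarith
    exact Nat.le_floor h1
  -- the set of first k+1 sorted indices
  set S := (Finset.Iic (⟨k, hk⟩ : Fin N)).image σ with hS
  have hScard : S.card = k + 1 := by
    rw [hS, Finset.card_image_of_injective _ σ.injective, Fin.card_Iic]
  have hex : ∃ i ∈ S, i ∉ B := by
    by_contra h
    push_neg at h
    have : S ⊆ B := fun i hi => h i hi
    have := Finset.card_le_card this
    omega
  obtain ⟨i, hiS, hiB⟩ := hex
  obtain ⟨j, hj, rfl⟩ := Finset.mem_image.mp hiS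
  have hxP : x ∈ P (σ j) := by
    by_contra hc
    exact hiB (Finset.mem_filter.mpr ⟨Finset.mem_univ _, hc⟩)
  have hmem : (∑ m, φ m * x m) ∈ {c : ℝ | ∃ y, y ∈ P (σ j) ∧ y ∈ X ∧ c = ∑ m, φ m * y m} :=
    ⟨x, hxP, hxX, rfl⟩
  have hle : q (σ j) ≤ ∑ m, φ m * x m := (hq (σ j)).1 hmem
  exact le_trans (hsorted j ⟨k, hk⟩ (Finset.mem_Iic.mp hj)) hle
end

section
/- Validity of the strong Benders optimality cut: Fix a scenario with dual vector ψ ≥ 0, data T, r, and a compact set X ⊆ ℝ^n. Let h(x) denote the second-stage optimal value and suppose the weak duality bound h(x) ≥ ψᵀ(r − Tx) holds for all x ∈ X, and h(x) ≥ 0. Let v̄ := min{ ψᵀT x : x ∈ X } (attained). Then for every x ∈ X, z ∈ {0,1}, and η ≥ 0 such that η ≥ h(x) whenever z = 0, the inequality η + (ψᵀr − v̄)·z ≥ ψᵀ(r − Tx) holds. -/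
/-- Validity of the strong Benders optimality cut for two-stage
chance-constrained programs. -/
theorem strong_benders_cut_valid (m n : ℕ)
    (ψ : Fin m → ℝ) (hψ : ∀ j, 0 ≤ ψ j)
    (T : Matrix (Fin m) (Fin n) ℝ) (r : Fin m → ℝ)
    (X : Set (Fin n → ℝ)) (hX : IsCompact X)
    (h : (Fin n → ℝ) → ℝ)
    (hweak : ∀ x ∈ X, ∑ j, ψ j * (r j - T.mulVec x j) ≤ h x)
    (hnonneg : ∀ x ∈ X, 0 ≤ h x)
    (vbar : ℝ)
    (hvbar : IsLeast {c : ℝ | ∃ x ∈ X, c = ∑ j, ψ j * T.mulVec x j} vbar) :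
    ∀ x ∈ X, ∀ z : ℝ, (z = 0 ∨ z = 1) → ∀ η : ℝ, 0 ≤ η →
      (z = 0 → h x ≤ η) →
      ∑ j, ψ j * (r j - T.mulVec x j) ≤ η + ((∑ j, ψ j * r j) - vbar) * z := by
  intro x hx z hz η hη hz0
  rcases hz with rfl | rfl
  · simpa using le_trans (hweak x hx) (hz0 rfl)
  · have hle : vbar ≤ ∑ j, ψ j * T.mulVec x j := hvbar.2 ⟨x, hx, rfl⟩
    have : ∑ j, ψ j * (r j - T.mulVec x j)
        = (∑ j, ψ j * r j) - ∑ j, ψ j * T.mulVec x j := by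
      rw [← Finset.sum_sub_distrib]; ring_nf
    rw [this]
    nlinarith
end

section
/- Distance to the unsafe set for a polyhedral safety set with RHS uncertainty: Let S(x) := { ω ∈ ℝ^d : Tx ≥ Bω + e } where T ∈ ℝ^{m×n}, B ∈ ℝ^{m×d} with each row B_j ≠ 0, and e ∈ ℝ^m. Then for any ω ∈ ℝ^d and x ∈ ℝ^n, the distance dist(ω, ℝ^d ∖ S(x)) := inf{ ‖ω − ω′‖ : ω′ ∉ S(x) } (with respect to a norm ‖·‖ with dual norm ‖·‖_*) equals max{ 0, min_{j∈[m]} (T_j x − B_j ω − e_j)/‖B_j‖_* }. -/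
/-- Distance from a realization ω to the unsafe set (complement of the
polyhedral safety set with RHS uncertainty), for a general norm `nrm` on ℝ^d
with dual norm given by `dual`. -/
theorem dist_to_unsafe_set (d m n : ℕ) (hm : 0 < m)
    (T : Matrix (Fin m) (Fin n) ℝ) (B : Matrix (Fin m) (Fin d) ℝ) (e : Fin m → ℝ)
    (hB : ∀ j, B j ≠ 0)
    (nrm : (Fin d → ℝ) → ℝ)
    (hnn : ∀ ω, 0 ≤ nrm ω)
    (hzero : ∀ ω, nrm ω = 0 ↔ ω = 0)
    (hhom : ∀ (c : ℝ) (ω), nrm (c • ω) = |c| * nrm ω)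
    (htri : ∀ ω ω', nrm (ω + ω') ≤ nrm ω + nrm ω')
    (dual : Fin m → ℝ)
    (hdual : ∀ j, IsLUB {c : ℝ | ∃ ω, nrm ω ≤ 1 ∧ c = ∑ i, B j i * ω i} (dual j))
    (x : Fin n → ℝ) (ω : Fin d → ℝ)
    (hne : ∃ ω' : Fin d → ℝ, ¬ ∀ j, ∑ i, B j i * ω' i + e j ≤ T.mulVec x j) :
    sInf {c : ℝ | ∃ ω' : Fin d → ℝ,
        (¬ ∀ j, ∑ i, B j i * ω' i + e j ≤ T.mulVec x j) ∧ c = nrm (ω - ω')} =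
      max 0 (Finset.univ.inf' (Finset.univ_nonempty_iff.mpr ⟨⟨0, hm⟩⟩)
        (fun j => (T.mulVec x j - (∑ i, B j i * ω i) - e j) / dual j)) := by
  classical
  set F : Fin m → (Fin d → ℝ) → ℝ := fun j v => ∑ i, B j i * v i with hF
  have Fsub : ∀ j (a b : Fin d → ℝ), F j (a - b) = F j a - F j b := by
    intro j a b
    simp [hF, Pi.sub_apply, mul_sub, Finset.sum_sub_distrib]
  have Fadd : ∀ j (a b : Fin d → ℝ), F j (a + b) = F j a + F j b := by
    intro j a b
    simp [hF, Pi.add_apply, mul_add, Finset.sum_add_distrib]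
  have Fsmul : ∀ j (t : ℝ) (u : Fin d → ℝ), F j (t • u) = t * F j u := by
    intro j t u
    simp only [hF, Pi.smul_apply, smul_eq_mul, Finset.mul_sum]
    exact Finset.sum_congr rfl fun i _ => by ring
  have Fneg : ∀ j (a : Fin d → ℝ), F j (-a) = - F j a := by
    intro j a
    simp [hF, mul_comm]
  have nrm_neg : ∀ v : Fin d → ℝ, nrm (-v) = nrm v := by
    intro v
    have := hhom (-1) v
    simpa using this
  -- dual j is an upper bound
  have hub : ∀ j (u : Fin d → ℝ), nrm u ≤ 1 → F j u ≤ dual j := by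
    intro j u hu
    exact (hdual j).1 ⟨u, hu, rfl⟩
  -- positivity of dual
  have dual_pos : ∀ j, 0 < dual j := by
    intro j
    have hBne : nrm (B j) ≠ 0 := fun h => hB j ((hzero _).1 h)
    have hBpos : 0 < nrm (B j) := lt_of_le_of_ne (hnn _) (Ne.symm hBne)
    have hFB : 0 < F j (B j) := by
      have h1 : ∀ i ∈ Finset.univ, 0 ≤ B j i * B j i := fun i _ => mul_self_nonneg _
      obtain ⟨i0, hi0⟩ := Function.ne_iff.1 (hB j)
      refine Finset.sum_pos' h1 ⟨i0, Finset.mem_univ _, ?_⟩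
      have : B j i0 ≠ 0 := by simpa using hi0
      exact mul_self_pos.2 this
    set u := (nrm (B j))⁻¹ • (B j) with hu
    have hnu : nrm u = 1 := by
      rw [hu, hhom, abs_of_pos (inv_pos.2 hBpos), inv_mul_cancel₀ hBne]
    have hFu : 0 < F j u := by
      rw [hu, Fsmul]
      exact mul_pos (inv_pos.2 hBpos) hFB
    exact lt_of_lt_of_le hFu (hub j u (le_of_eq hnu))
  -- main bound: F j v ≤ dual j * nrm v
  have Fbound : ∀ j (v : Fin d → ℝ), F j v ≤ dual j * nrm v := by
    intro j v
    by_cases hv : nrm v = 0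
    · have : v = 0 := (hzero v).1 hv
      have h0 : nrm (0 : Fin d → ℝ) = 0 := (hzero 0).2 rfl
      rw [this, h0]
      simp [hF]
    · have hvpos : 0 < nrm v := lt_of_le_of_ne (hnn _) (Ne.symm hv)
      have h1 : F j ((nrm v)⁻¹ • v) ≤ dual j := by
        apply hub
        rw [hhom, abs_of_pos (inv_pos.2 hvpos), inv_mul_cancel₀ hv]
      rw [Fsmul] at h1
      have := mul_le_mul_of_nonneg_left h1 (le_of_lt hvpos)
      calc F j v = nrm v * ((nrm v)⁻¹ * F j v) := by field_simp
        _ ≤ nrm v * dual j := this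
        _ = dual j * nrm v := mul_comm _ _
  -- approximate sup
  have exists_good : ∀ j (R : ℝ), R < dual j → ∃ u : Fin d → ℝ, nrm u ≤ 1 ∧ R < F j u := by
    intro j R hR
    obtain ⟨c, hc, hRc⟩ := (lt_isLUB_iff (hdual j)).1 hR
    obtain ⟨u, hu, rfl⟩ := hc
    exact ⟨u, hu, hRc⟩
  set S : Set ℝ := {c : ℝ | ∃ ω' : Fin d → ℝ,
      (¬ ∀ j, ∑ i, B j i * ω' i + e j ≤ T.mulVec x j) ∧ c = nrm (ω - ω')} with hS
  have hSne : S.Nonempty := by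
    obtain ⟨ω0, hω0⟩ := hne
    exact ⟨nrm (ω - ω0), ω0, hω0, rfl⟩
  have hSbdd : BddBelow S := by
    refine ⟨0, ?_⟩
    rintro s ⟨ω', -, rfl⟩
    exact hnn _
  set g : Fin m → ℝ := fun j => (T.mulVec x j - (∑ i, B j i * ω i) - e j) / dual j with hg
  set M : ℝ := max 0 (Finset.univ.inf' (Finset.univ_nonempty_iff.mpr ⟨⟨0, hm⟩⟩) g) with hM
  show sInf S = M
  have hMinf : Finset.univ.inf' (Finset.univ_nonempty_iff.mpr ⟨⟨0, hm⟩⟩) g ≤ M := le_max_right _ _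
  have hM0 : (0:ℝ) ≤ M := le_max_left _ _
  apply le_antisymm
  · -- sInf S ≤ M
    apply le_of_forall_pos_le_add
    intro ε hε
    obtain ⟨j0, -, hj0⟩ := Finset.exists_mem_eq_inf'
      (Finset.univ_nonempty_iff.mpr ⟨⟨0, hm⟩⟩ : (Finset.univ : Finset (Fin m)).Nonempty) g
    set num := T.mulVec x j0 - F j0 ω - e j0 with hnum
    by_cases hcase : num ≤ 0
    · -- ω is (almost) unsafe already
      obtain ⟨u, hu1, hu2⟩ := exists_good j0 0 (dual_pos j0)
      set ω' := ω + (ε/2) • u with hω'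
      have hunsafe : ¬ ∀ j, ∑ i, B j i * ω' i + e j ≤ T.mulVec x j := by
        intro hall
        have := hall j0
        have hFω' : F j0 ω' = F j0 ω + (ε/2) * F j0 u := by
          rw [hω', Fadd, Fsmul]
        have : F j0 ω' + e j0 ≤ T.mulVec x j0 := hall j0
        nlinarith
      have hdist : nrm (ω - ω') ≤ ε/2 := by
        have : ω - ω' = -((ε/2) • u) := by
          rw [hω']; abel
        rw [this, nrm_neg, hhom, abs_of_pos (by linarith : (0:ℝ) < ε/2)]
        nlinarith
      have h1 : sInf S ≤ nrm (ω - ω') := csInf_le hSbdd ⟨ω', hunsafe, rfl⟩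
      linarith
    · push_neg at hcase
      have hg0 : g j0 = num / dual j0 := rfl
      have hg0pos : 0 < g j0 := div_pos hcase (dual_pos j0)
      set R := num / (g j0 + ε/2) with hR
      have hRpos : 0 < R := div_pos hcase (by linarith)
      have hRlt : R < dual j0 := by
        have h1 : num / (g j0 + ε/2) < num / g j0 :=
          div_lt_div_of_pos_left hcase hg0pos (by linarith)
        have h2 : num / g j0 = dual j0 := by
          rw [hg0]
          field_simp
        linarith [h1, h2.symm.le]
      obtain ⟨u, hu1, hu2⟩ := exists_good j0 R hRlt
      set t := g j0 + ε/2 with ht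
      have htpos : 0 < t := by positivity
      set ω' := ω + t • u with hω'
      have hunsafe : ¬ ∀ j, ∑ i, B j i * ω' i + e j ≤ T.mulVec x j := by
        intro hall
        have hFω' : F j0 ω' = F j0 ω + t * F j0 u := by
          rw [hω', Fadd, Fsmul]
        have h3 : F j0 ω' + e j0 ≤ T.mulVec x j0 := hall j0
        have htR : t * R = num := by
          rw [hR, ht]
          field_simp
        nlinarith [mul_lt_mul_of_pos_left hu2 htpos]
      have hdist : nrm (ω - ω') ≤ t := by
        have heq : ω - ω' = -(t • u) := by rw [hω']; abel
        rw [heq, nrm_neg, hhom, abs_of_pos htpos]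
        nlinarith
      have h1 : sInf S ≤ nrm (ω - ω') := csInf_le hSbdd ⟨ω', hunsafe, rfl⟩
      have h2 : g j0 ≤ M := hj0 ▸ hMinf
      calc sInf S ≤ t := le_trans h1 hdist
        _ = g j0 + ε/2 := ht
        _ ≤ M + ε := by linarith
  · -- M ≤ sInf S
    apply le_csInf hSne
    rintro s ⟨ω', hω', rfl⟩
    push_neg at hω'
    obtain ⟨j, hj⟩ := hω'
    apply max_le (hnn _)
    refine le_trans (Finset.inf'_le g (Finset.mem_univ j)) ?_
    rw [hg]
    rw [div_le_iff₀ (dual_pos j)]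
    have h1 : F j (ω' - ω) ≤ dual j * nrm (ω' - ω) := Fbound j _
    have h2 : nrm (ω' - ω) = nrm (ω - ω') := by
      rw [show ω' - ω = -(ω - ω') by abel, nrm_neg]
    rw [Fsub, h2] at h1
    have h3 : T.mulVec x j < F j ω' + e j := hj
    have h4 : F j ω = ∑ i, B j i * ω i := rfl
    rw [← h4]
    nlinarith [h1, h3]
end
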